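/- For any α ∈ S_{2t} and any β ∈ S_{2t} such that β(x) ⊕ x = 1 mod 2 for all x (β swaps parities), the number of cycles of βα is at most t + T(α), where T(α) is the minimum number of transpositions expressing α. -/

import Mathlib

/-- The number of cycles (orbits, including fixed points) of a permutation of `Fin n`. -/
noncomputable def cycleCount {n : ℕ} (σ : Equiv.Perm (Fin n)) : ℕ :=
  Nat.card (MulAction.orbitRel.Quotient (Subgroup.zpowers σ) (Fin n))

/-- The minimum number of transpositions whose product is `σ`. -/
noncomputable def transCount {n : ℕ} (σ : Equiv.Perm (Fin n)) : ℕ :=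
  sInf {k | ∃ l : List (Equiv.Perm (Fin n)),
    l.length = k ∧ (∀ τ ∈ l, τ.IsSwap) ∧ l.prod = σ}

namespace CycleCountAux

open Equiv Equiv.Perm MulAction Subgroup

variable {n : ℕ}

/-- The orbit relation of `zpowers σ` is `SameCycle`. -/
lemma orbitRel_iff (σ : Perm (Fin n)) (x y : Fin n) :
    (MulAction.orbitRel (zpowers σ) (Fin n)) x y ↔ σ.SameCycle x y := by
  rw [MulAction.orbitRel_apply, MulAction.mem_orbit_iff]
  constructor
  · rintro ⟨⟨g, hg⟩, h⟩
    obtain ⟨k, rfl⟩ := Subgroup.mem_zpowers_iff.mp hg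
    exact (Equiv.Perm.SameCycle.symm ⟨k, h⟩)
  · rintro ⟨k, hk⟩
    exact ⟨⟨σ ^ (-k), Subgroup.mem_zpowers_iff.mpr ⟨-k, rfl⟩⟩, by
      show (σ ^ (-k)) y = x
      rw [← hk]; simp [zpow_neg]⟩

lemma sc_left (σ : Perm (Fin n)) (z : Fin n) : σ.SameCycle (σ z) z := ⟨-1, by simp⟩

lemma sc_right (σ : Perm (Fin n)) (z : Fin n) : σ.SameCycle z (σ z) := ⟨1, by simp⟩

/-- Generic principle: if `S` is an equivalence-like relation preserved by applying `σ`,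
then same-cycle elements of `σ` are `S`-related. -/
lemma sameCycle_imp (σ : Perm (Fin n)) (S : Fin n → Fin n → Prop)
    (hsymm : ∀ {x y}, S x y → S y x)
    (htrans : ∀ {x y z}, S x y → S y z → S x z)
    (hrefl : ∀ x, S x x)
    (hstep : ∀ z, S (σ z) z) :
    ∀ {x y}, σ.SameCycle x y → S x y := by
  have hfwd : ∀ (m : ℕ) (z : Fin n), S ((σ ^ m) z) z := by
    intro m
    induction m with
    | zero => intro z; simpa using hrefl z
    | succ m ih =>
        intro z
        have : (σ ^ (m + 1)) z = σ ((σ ^ m) z) := by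
          rw [pow_succ']; rfl
        rw [this]
        exact htrans (hstep _) (ih z)
  have hstep' : ∀ z, S (σ⁻¹ z) z := by
    intro z
    have := hstep (σ⁻¹ z)
    rw [← Equiv.Perm.mul_apply, mul_inv_cancel, Equiv.Perm.one_apply] at this
    exact hsymm this
  have hbwd : ∀ (m : ℕ) (z : Fin n), S ((σ⁻¹ ^ m) z) z := by
    intro m
    induction m with
    | zero => intro z; simpa using hrefl z
    | succ m ih =>
        intro z
        have : (σ⁻¹ ^ (m + 1)) z = σ⁻¹ ((σ⁻¹ ^ m) z) := by
          rw [pow_succ']; rfl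
        rw [this]
        exact htrans (hstep' _) (ih z)
  rintro x y ⟨k, hk⟩
  rcases k with m | m
  · rw [Int.ofNat_eq_coe, zpow_natCast] at hk
    exact hsymm (hk ▸ hfwd m x)
  · rw [zpow_negSucc, ← inv_pow] at hk
    exact hsymm (hk ▸ hbwd (m + 1) x)

lemma sameCycle_of_orbitRel' {σ σ' : Perm (Fin n)}
    (hstep : ∀ z, σ.SameCycle (σ' z) z) {x y : Fin n}
    (h : σ'.SameCycle x y) : σ.SameCycle x y :=
  sameCycle_imp σ' _ (fun h => h.symm) (fun h h' => h.trans h') (fun _ => SameCycle.refl _ _)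
    hstep h

lemma cycleCount_one : cycleCount (1 : Perm (Fin n)) = n := by
  have hb : Function.Bijective
      (Quotient.mk (MulAction.orbitRel (zpowers (1 : Perm (Fin n))) (Fin n))) := by
    constructor
    · intro a b h
      have h2 := Quotient.exact h
      obtain ⟨k, hk⟩ := (orbitRel_iff (1 : Perm (Fin n)) a b).mp h2
      simpa using hk
    · exact Quotient.exists_rep
  have := Nat.card_eq_of_bijective _ hb
  simp only [cycleCount, MulAction.orbitRel.Quotient]
  rw [← this, Nat.card_eq_fintype_card, Fintype.card_fin]

/-- Multiplying by a swap decreases the cycle count by at most 1. -/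
lemma cycleCount_le_swap_mul (σ τ : Perm (Fin n)) (hτ : τ.IsSwap) :
    cycleCount σ ≤ cycleCount (τ * σ) + 1 := by
  classical
  obtain ⟨a, b, hab, rfl⟩ := hτ
  set σ' := Equiv.swap a b * σ with hσ'
  -- the relation S
  set S : Fin n → Fin n → Prop := fun x y =>
    σ.SameCycle x y ∨ (σ.SameCycle x a ∧ σ.SameCycle b y) ∨
      (σ.SameCycle x b ∧ σ.SameCycle a y) with hS
  have Ssymm : ∀ {x y}, S x y → S y x := by
    rintro x y (h | ⟨h1, h2⟩ | ⟨h1, h2⟩)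
    · exact Or.inl h.symm
    · exact Or.inr (Or.inr ⟨h2.symm, h1.symm⟩)
    · exact Or.inr (Or.inl ⟨h2.symm, h1.symm⟩)
  have Strans : ∀ {x y z}, S x y → S y z → S x z := by
    rintro x y z (h | ⟨h1, h2⟩ | ⟨h1, h2⟩) (h' | ⟨h1', h2'⟩ | ⟨h1', h2'⟩)
    · exact Or.inl (h.trans h')
    · exact Or.inr (Or.inl ⟨h.trans h1', h2'⟩)
    · exact Or.inr (Or.inr ⟨h.trans h1', h2'⟩)
    · exact Or.inr (Or.inl ⟨h1, h2.trans h'⟩)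
    · exact Or.inl (h1.trans ((h2.trans h1').symm.trans h2').symm.symm |>.symm.symm)
    · exact Or.inl (h1.trans h2')
    · exact Or.inr (Or.inr ⟨h1, h2.trans h'⟩)
    · exact Or.inl (h1.trans h2')
    · exact Or.inl (h1.trans (((h2.trans h1').symm.trans h2')))
  have Srefl : ∀ x, S x x := fun x => Or.inl (SameCycle.refl _ _)
  have hstep : ∀ z, S (σ' z) z := by
    intro z
    by_cases h1 : σ z = a
    · have : σ' z = b := by rw [hσ']; simp [h1]
      rw [this]
      exact Or.inr (Or.inr ⟨SameCycle.refl _ _, h1 ▸ sc_left σ z⟩)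
    · by_cases h2 : σ z = b
      · have : σ' z = a := by rw [hσ']; simp [h2, Equiv.swap_apply_of_ne_of_ne]
        rw [this]
        exact Or.inr (Or.inl ⟨SameCycle.refl _ _, h2 ▸ sc_left σ z⟩)
      · have : σ' z = σ z := by
          rw [hσ']; simp [Equiv.swap_apply_of_ne_of_ne h1 h2]
        rw [this]
        exact Or.inl (sc_left σ z)
  have hS' : ∀ {x y}, σ'.SameCycle x y → S x y := fun h =>
    sameCycle_imp σ' S Ssymm Strans Srefl hstep h
  -- setoid for S
  let sS : Setoid (Fin n) := ⟨S, Srefl, Ssymm, Strans⟩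
  -- surjection from orbit quotient of σ' onto Quotient sS
  let f1 : MulAction.orbitRel.Quotient (zpowers σ') (Fin n) → Quotient sS :=
    Quotient.lift (Quotient.mk sS) (by
      intro x y h
      exact Quotient.sound (hS' ((orbitRel_iff σ' x y).mp h)))
  have hf1 : Function.Surjective f1 := by
    intro q
    obtain ⟨x, rfl⟩ := Quotient.exists_rep q
    exact ⟨Quotient.mk _ x, rfl⟩
  have hcard1 : Nat.card (Quotient sS) ≤ cycleCount σ' :=
    Nat.card_le_card_of_surjective f1 hf1
  -- injection from orbit quotient of σ into Quotient sS ⊕ Unit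
  let f2 : MulAction.orbitRel.Quotient (zpowers σ) (Fin n) → Quotient sS :=
    Quotient.lift (Quotient.mk sS) (by
      intro x y h
      exact Quotient.sound (Or.inl ((orbitRel_iff σ x y).mp h)))
  let qa : MulAction.orbitRel.Quotient (zpowers σ) (Fin n) := Quotient.mk _ a
  let g : MulAction.orbitRel.Quotient (zpowers σ) (Fin n) → Quotient sS ⊕ Unit :=
    fun q => if q = qa then Sum.inr () else Sum.inl (f2 q)
  have hg : Function.Injective g := by
    intro q1 q2 h
    by_cases h1 : q1 = qa <;> by_cases h2 : q2 = qa
    · rw [h1, h2]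
    · simp only [g, if_pos h1, if_neg h2] at h; exact absurd h.symm (by simp)
    · simp only [g, if_neg h1, if_pos h2] at h; exact absurd h (by simp)
    · simp only [g, if_neg h1, if_neg h2, Sum.inl.injEq] at h
      obtain ⟨x, rfl⟩ := Quotient.exists_rep q1
      obtain ⟨y, rfl⟩ := Quotient.exists_rep q2
      have hxy : S x y := Quotient.exact h
      rcases hxy with hxy | ⟨ha1, hb1⟩ | ⟨ha1, hb1⟩
      · exact Quotient.sound ((orbitRel_iff σ x y).mpr hxy)
      · exact absurd (Quotient.sound ((orbitRel_iff σ x a).mpr ha1)) h1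
      · exact absurd (Quotient.sound ((orbitRel_iff σ y a).mpr hb1.symm)) h2
  have hcard2 : cycleCount σ ≤ Nat.card (Quotient sS ⊕ Unit) :=
    Nat.card_le_card_of_injective g hg
  rw [Nat.card_sum] at hcard2
  simp only [Nat.card_unique] at hcard2
  omega

/-- If `σ x ≠ x`, then multiplying by `swap x (σ x)` increases the cycle count. -/
lemma cycleCount_lt_swap_mul (σ : Perm (Fin n)) (x : Fin n) (hx : σ x ≠ x) :
    cycleCount σ + 1 ≤ cycleCount (Equiv.swap x (σ x) * σ) := by
  classical
  set σ' := Equiv.swap x (σ x) * σ with hσ'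
  have hstep : ∀ z, σ.SameCycle (σ' z) z := by
    intro z
    by_cases h1 : σ z = x
    · have : σ' z = σ x := by rw [hσ']; simp [h1]
      rw [this]
      exact (sc_left σ x).trans (h1 ▸ sc_left σ z)
    · by_cases h2 : σ z = σ x
      · have hz : z = x := σ.injective h2
        have : σ' z = z := by rw [hσ', hz]; simp
        rw [this]
      · have : σ' z = σ z := by
          rw [hσ']; simp [Equiv.swap_apply_of_ne_of_ne h1 h2]
        rw [this]
        exact sc_left σ z
  -- surjection f from quotient of σ' onto quotient of σ
  let f : MulAction.orbitRel.Quotient (zpowers σ') (Fin n) →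
      MulAction.orbitRel.Quotient (zpowers σ) (Fin n) :=
    Quotient.lift (Quotient.mk _) (by
      intro a b h
      exact Quotient.sound ((orbitRel_iff σ a b).mpr
        (sameCycle_of_orbitRel' hstep ((orbitRel_iff σ' a b).mp h))))
  have hf : Function.Surjective f := by
    intro q
    obtain ⟨z, rfl⟩ := Quotient.exists_rep q
    exact ⟨Quotient.mk _ z, rfl⟩
  -- the two points that get identified
  set u : MulAction.orbitRel.Quotient (zpowers σ') (Fin n) := Quotient.mk _ x with hu
  set v : MulAction.orbitRel.Quotient (zpowers σ') (Fin n) := Quotient.mk _ (σ x) with hv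
  have huv : u ≠ v := by
    intro h
    have h2 : σ'.SameCycle x (σ x) := (orbitRel_iff σ' x (σ x)).mp (Quotient.exact h)
    obtain ⟨k, hk⟩ := h2
    have hfix : σ' x = x := by rw [hσ']; simp
    rw [Equiv.Perm.zpow_apply_eq_self_of_apply_eq_self hfix] at hk
    exact hx hk.symm
  have hfeq : f u = f v := by
    show Quotient.mk _ x = Quotient.mk _ (σ x)
    exact Quotient.sound ((orbitRel_iff σ x (σ x)).mpr (sc_right σ x))
  -- counting: surjective non-injective map
  let f' : {q : MulAction.orbitRel.Quotient (zpowers σ') (Fin n) // q ≠ u} →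
      MulAction.orbitRel.Quotient (zpowers σ) (Fin n) := fun q => f q.1
  have hf' : Function.Surjective f' := by
    intro b
    obtain ⟨q, hq⟩ := hf b
    by_cases h : q = u
    · exact ⟨⟨v, Ne.symm huv⟩, by rw [← hq, h, hfeq]⟩
    · exact ⟨⟨q, h⟩, hq⟩
  have h1 : cycleCount σ ≤ Nat.card {q : MulAction.orbitRel.Quotient (zpowers σ') (Fin n) // q ≠ u} :=
    Nat.card_le_card_of_surjective f' hf'
  have h2 : Nat.card {q : MulAction.orbitRel.Quotient (zpowers σ') (Fin n) // q = u} +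
      Nat.card {q : MulAction.orbitRel.Quotient (zpowers σ') (Fin n) // q ≠ u} = cycleCount σ' := by
    rw [← Nat.card_sum]
    exact Nat.card_congr (Equiv.sumCompl _)
  haveI : Unique {q : MulAction.orbitRel.Quotient (zpowers σ') (Fin n) // q = u} :=
    ⟨⟨⟨u, rfl⟩⟩, by rintro ⟨q, rfl⟩; rfl⟩
  rw [Nat.card_unique] at h2
  omega

lemma transCount_exists_list (σ : Perm (Fin n)) :
    ∃ l : List (Perm (Fin n)), l.length = transCount σ ∧ (∀ τ ∈ l, τ.IsSwap) ∧ l.prod = σ := by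
  classical
  have hne : {k | ∃ l : List (Perm (Fin n)),
      l.length = k ∧ (∀ τ ∈ l, τ.IsSwap) ∧ l.prod = σ}.Nonempty := by
    obtain ⟨l, hl1, hl2⟩ := (Equiv.Perm.truncSwapFactors σ).out
    exact ⟨l.length, l, rfl, hl2, hl1⟩
  exact Nat.sInf_mem hne

lemma transCount_le (σ : Perm (Fin n)) (l : List (Perm (Fin n)))
    (h1 : ∀ τ ∈ l, τ.IsSwap) (h2 : l.prod = σ) : transCount σ ≤ l.length :=
  Nat.sInf_le ⟨l, rfl, h1, h2⟩

/-- Lower bound on cycle count for products of swaps. -/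
lemma le_cycleCount_add_length (l : List (Perm (Fin n))) (hl : ∀ τ ∈ l, τ.IsSwap) :
    n ≤ cycleCount l.prod + l.length := by
  induction l with
  | nil => simp [cycleCount_one]
  | cons τ l ih =>
      have h1 : n ≤ cycleCount l.prod + l.length := ih (fun x hx => hl x (List.mem_cons_of_mem _ hx))
      have h2 : cycleCount l.prod ≤ cycleCount (τ * l.prod) + 1 :=
        cycleCount_le_swap_mul l.prod τ (hl τ List.mem_cons_self)
      rw [List.prod_cons, List.length_cons]
      omega

lemma le_cycleCount_add_transCount (σ : Perm (Fin n)) :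
    n ≤ cycleCount σ + transCount σ := by
  obtain ⟨l, h1, h2, h3⟩ := transCount_exists_list σ
  have := le_cycleCount_add_length l h2
  rw [h3, h1] at this
  exact this

lemma transCount_one : transCount (1 : Perm (Fin n)) = 0 :=
  Nat.le_zero.mp (transCount_le 1 [] (by simp) (by simp))

/-- Upper bound: `transCount σ + cycleCount σ ≤ n`. -/
lemma transCount_add_cycleCount_le (σ : Perm (Fin n)) :
    transCount σ + cycleCount σ ≤ n := by
  classical
  generalize hk : σ.support.card = k
  induction k using Nat.strong_induction_on generalizing σ with
  | _ k ih =>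
    by_cases h1 : σ = 1
    · subst h1
      rw [transCount_one, cycleCount_one]
      omega
    · obtain ⟨x, hx⟩ : ∃ x, σ x ≠ x := by
        by_contra h
        push_neg at h
        exact h1 (Equiv.ext h)
      set σ' := Equiv.swap x (σ x) * σ with hσ'
      have hlt : σ'.support.card < k := hk ▸ Equiv.Perm.card_support_swap_mul hx
      have hIH : transCount σ' + cycleCount σ' ≤ n := ih _ hlt σ' rfl
      have hT : transCount σ ≤ transCount σ' + 1 := by
        obtain ⟨l, h1', h2', h3'⟩ := transCount_exists_list σ'
        have : (Equiv.swap x (σ x) :: l).prod = σ := by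
          rw [List.prod_cons, h3', hσ', ← mul_assoc, Equiv.swap_mul_self, one_mul]
        have := transCount_le σ _ (by
          intro τ hτ
          rcases List.mem_cons.mp hτ with h | h
          · exact h ▸ ⟨x, σ x, Ne.symm hx, rfl⟩
          · exact h2' τ h) this
        simpa [h1'] using this
      have hC : cycleCount σ + 1 ≤ cycleCount σ' := cycleCount_lt_swap_mul σ x hx
      omega

lemma transCount_mul_le (a b : Perm (Fin n)) :
    transCount (a * b) ≤ transCount a + transCount b := by
  obtain ⟨la, ha1, ha2, ha3⟩ := transCount_exists_list a
  obtain ⟨lb, hb1, hb2, hb3⟩ := transCount_exists_list b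
  have := transCount_le (a * b) (la ++ lb) (by
    intro τ hτ
    rcases List.mem_append.mp hτ with h | h
    · exact ha2 τ h
    · exact hb2 τ h) (by rw [List.prod_append, ha3, hb3])
  simpa [ha1, hb1] using this

lemma transCount_inv_le (a : Perm (Fin n)) : transCount a⁻¹ ≤ transCount a := by
  obtain ⟨l, h1, h2, h3⟩ := transCount_exists_list a
  have hprod : ((l.map (·⁻¹)).reverse).prod = a⁻¹ := by
    rw [← h3, ← List.prod_inv_reverse]
  have := transCount_le a⁻¹ _ (by
    intro τ hτ
    rw [List.mem_reverse, List.mem_map] at hτ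
    obtain ⟨τ', hτ', rfl⟩ := hτ
    obtain ⟨c, d, hcd, rfl⟩ := h2 τ' hτ'
    exact ⟨c, d, hcd, by rw [Equiv.swap_inv]⟩) hprod
  simpa [h1] using this

end CycleCountAux

open CycleCountAux Equiv Equiv.Perm MulAction Subgroup in
theorem cycleCount_mul_parity_swapping_le (t : ℕ) (α β : Equiv.Perm (Fin (2 * t)))
    (hβ : ∀ x : Fin (2 * t), (β x : ℕ) % 2 ≠ (x : ℕ) % 2) :
    cycleCount (β * α) ≤ t + transCount α := by
  classical
  have hβne : ∀ z : Fin (2 * t), β z ≠ z := by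
    intro z h
    exact hβ z (by rw [h])
  -- cycleCount β ≤ t
  have hcβ : 2 * cycleCount β ≤ 2 * t := by
    let Q := MulAction.orbitRel.Quotient (zpowers β) (Fin (2 * t))
    let F : Q ⊕ Q → Fin (2 * t) := fun q =>
      match q with
      | Sum.inl q => q.out
      | Sum.inr q => β q.out
    have hF : Function.Injective F := by
      have key : ∀ q q' : Q, q.out = β q'.out → False := by
        intro q q' h
        have h2 : (MulAction.orbitRel (zpowers β) (Fin (2 * t))) (β q'.out) q'.out :=
          (orbitRel_iff β _ _).mpr (sc_left β q'.out)
        have : q = q' := by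
          rw [← Quotient.out_eq q, ← Quotient.out_eq q', h]
          exact Quotient.sound h2
        subst this
        exact hβne q.out h.symm
      intro q1 q2 h
      match q1, q2 with
      | Sum.inl q1, Sum.inl q2 => rw [Sum.inl.injEq]; exact Quotient.out_injective h
      | Sum.inr q1, Sum.inr q2 =>
          rw [Sum.inr.injEq]; exact Quotient.out_injective (β.injective h)
      | Sum.inl q1, Sum.inr q2 => exact absurd h (fun h => key q1 q2 h)
      | Sum.inr q1, Sum.inl q2 => exact absurd h.symm (fun h => key q2 q1 h)
    have := Nat.card_le_card_of_injective F hF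
    rw [Nat.card_sum] at this
    simpa [cycleCount, Q, two_mul, Nat.card_eq_fintype_card] using this
  have h1 : 2 * t ≤ cycleCount β + transCount β := le_cycleCount_add_transCount β
  have h2 : transCount β ≤ transCount (β * α) + transCount α := by
    have hb : β = (β * α) * α⁻¹ := by group
    calc transCount β = transCount ((β * α) * α⁻¹) := by rw [← hb]
      _ ≤ transCount (β * α) + transCount α⁻¹ := transCount_mul_le _ _
      _ ≤ transCount (β * α) + transCount α := by
          have := transCount_inv_le α; omega
  have h3 : transCount (β * α) + cycleCount (β * α) ≤ 2 * t :=
    transCount_add_cycleCount_le (β * α)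
  omega
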